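/- Let G = (X, b, m) be a weighted graph, v ∈ F bounded with ℒv = λv for some λ < 0, and suppose v(x₀) > 0 for some x₀. Then there exists a path x₀ ∼ x₁ ∼ x₂ ∼ … such that for all n, v(x_{n+1}) ≥ ∏_{k=0}^{n} (1 − λ/Deg(x_k)) · v(x₀). -/

import Mathlib

noncomputable def lap {X : Type*} (b : X → X → ℝ) (m : X → ℝ) (f : X → ℝ) (x : X) : ℝ :=
  (1 / m x) * ∑' y, b x y * (f x - f y)

noncomputable def deg {X : Type*} (b : X → X → ℝ) (m : X → ℝ) (x : X) : ℝ :=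
  (1 / m x) * ∑' y, b x y

theorem key_step {X : Type*} (b : X → X → ℝ) (m : X → ℝ)
    (hb_nonneg : ∀ x y, 0 ≤ b x y) (hb_sum : ∀ x, Summable fun y => b x y)
    (hm : ∀ x, 0 < m x)
    (v : X → ℝ) (hvF : ∀ x, Summable fun y => b x y * |v y|)
    (lam : ℝ) (hlam : lam < 0)
    (hharm : ∀ x, lap b m v x = lam * v x)
    (x : X) (hx : 0 < v x) :
    0 < 1 - lam / deg b m x ∧
      ∃ y, 0 < b x y ∧ (1 - lam / deg b m x) * v x ≤ v y ∧ 0 < v y := by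
  have hmx := hm x
  -- summability
  have hS : Summable fun y => b x y * v y := by
    apply Summable.of_abs
    have : (fun y => |b x y * v y|) = fun y => b x y * |v y| := by
      funext y; rw [abs_mul, abs_of_nonneg (hb_nonneg x y)]
    rw [this]; exact hvF x
  have hB : Summable fun y => b x y * v x := (hb_sum x).mul_right (v x)
  set B := ∑' y, b x y with hBdef
  set S := ∑' y, b x y * v y with hSdef
  have hBnn : 0 ≤ B := tsum_nonneg fun y => hb_nonneg x y
  -- expand the harmonic equation
  have hexp : ∑' y, b x y * (v x - v y) = B * v x - S := by
    have : (fun y => b x y * (v x - v y)) = fun y => b x y * v x - b x y * v y := by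
      funext y; ring
    rw [this, Summable.tsum_sub hB hS, tsum_mul_right]
  have heq : S = (B - lam * m x) * v x := by
    have h := hharm x
    rw [lap, hexp] at h
    field_simp at h
    nlinarith [h]
  have hSpos : 0 < S := by
    rw [heq]
    have : 0 < B - lam * m x := by nlinarith
    positivity
  -- B > 0
  have hy0 : ∃ y, 0 < b x y := by
    by_contra h
    push_neg at h
    have : ∀ y, b x y = 0 := fun y => le_antisymm (h y) (hb_nonneg x y)
    have : S = 0 := by
      rw [hSdef]
      convert tsum_zero with y
      rw [this y, zero_mul]
    linarith
  obtain ⟨y₀, hy₀⟩ := hy0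
  have hBpos : 0 < B := lt_of_lt_of_le hy₀ (Summable.le_tsum (hb_sum x) y₀ fun j _ => hb_nonneg x j)
  have hdeg : deg b m x = B / m x := by rw [deg]; ring
  have hdegpos : 0 < deg b m x := by rw [hdeg]; positivity
  set c := 1 - lam / deg b m x with hcdef
  have hc1 : 1 < c := by
    have : lam / deg b m x < 0 := div_neg_of_neg_of_pos hlam hdegpos
    rw [hcdef]; linarith
  have hcpos : 0 < c := lt_trans one_pos hc1
  refine ⟨hcpos, ?_⟩
  -- c * B = B - lam * m x
  have hcB : c * B = B - lam * m x := by
    rw [hcdef, hdeg]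
    field_simp
  by_contra hcon
  push_neg at hcon
  -- every neighbor y with b x y > 0 has v y < c * v x
  have hlt : ∀ y, 0 < b x y → v y < c * v x := by
    intro y hby
    by_contra h
    push_neg at h
    have := hcon y hby h
    nlinarith [mul_pos hcpos hx]
  -- w y := b x y * (c * v x - v y) is nonneg, summable, sums to 0
  have hw_nonneg : ∀ y, 0 ≤ b x y * (c * v x - v y) := by
    intro y
    rcases eq_or_lt_of_le (hb_nonneg x y) with h | h
    · rw [← h, zero_mul]
    · exact le_of_lt (mul_pos h (by linarith [hlt y h]))
  have hw_summ : Summable fun y => b x y * (c * v x - v y) := by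
    have : (fun y => b x y * (c * v x - v y)) = fun y => b x y * (c * v x) - b x y * v y := by
      funext y; ring
    rw [this]
    exact ((hb_sum x).mul_right _).sub hS
  have hw_sum : ∑' y, b x y * (c * v x - v y) = 0 := by
    have : (fun y => b x y * (c * v x - v y)) = fun y => b x y * (c * v x) - b x y * v y := by
      funext y; ring
    rw [this, Summable.tsum_sub ((hb_sum x).mul_right _) hS, tsum_mul_right, ← hSdef, ← hBdef, heq]
    linear_combination v x * hcB
  have : b x y₀ * (c * v x - v y₀) ≤ 0 := by
    rw [← hw_sum]
    exact Summable.le_tsum hw_summ y₀ fun j _ => hw_nonneg j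
  have : 0 < b x y₀ * (c * v x - v y₀) := mul_pos hy₀ (by linarith [hlt y₀ hy₀])
  linarith

/-- If `v` is a bounded `λ`-harmonic function (`λ < 0`) with `v(x₀) > 0`, then there is a
path `x₀ ∼ x₁ ∼ x₂ ∼ …` along which `v(x_{n+1}) ≥ ∏_{k=0}^{n} (1 − λ/Deg(x_k)) · v(x₀)`. -/
theorem harmonic_growth_along_path {X : Type*} (b : X → X → ℝ) (m : X → ℝ)
    (hb_symm : ∀ x y, b x y = b y x) (hb_nonneg : ∀ x y, 0 ≤ b x y)
    (hb_diag : ∀ x, b x x = 0) (hb_sum : ∀ x, Summable fun y => b x y)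
    (hm : ∀ x, 0 < m x)
    (v : X → ℝ) (hvF : ∀ x, Summable fun y => b x y * |v y|)
    (hvbd : ∃ C : ℝ, ∀ x, |v x| ≤ C)
    (lam : ℝ) (hlam : lam < 0)
    (hharm : ∀ x, lap b m v x = lam * v x)
    (x₀ : X) (hpos : 0 < v x₀) :
    ∃ p : ℕ → X, p 0 = x₀ ∧ (∀ n, 0 < b (p n) (p (n + 1))) ∧
      ∀ n, (∏ k ∈ Finset.range (n + 1), (1 - lam / deg b m (p k))) * v x₀ ≤ v (p (n + 1)) := by

  have key := fun x hx => key_step b m hb_nonneg hb_sum hm v hvF lam hlam hharm x hx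
  -- iterate the choice
  let g : {x : X // 0 < v x} → {x : X // 0 < v x} := fun s =>
    ⟨(key s.1 s.2).2.choose, (key s.1 s.2).2.choose_spec.2.2⟩
  let q : ℕ → {x : X // 0 < v x} := fun n => g^[n] ⟨x₀, hpos⟩
  have hq_succ : ∀ n, q (n + 1) = g (q n) := fun n => Function.iterate_succ_apply' g n _
  have hg : ∀ s : {x : X // 0 < v x},
      0 < b s.1 (g s).1 ∧ (1 - lam / deg b m s.1) * v s.1 ≤ v (g s).1 := fun s =>
    ⟨(key s.1 s.2).2.choose_spec.1, (key s.1 s.2).2.choose_spec.2.1⟩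
  have hq0 : (q 0).1 = x₀ := rfl
  refine ⟨fun n => (q n).1, rfl, ?_, ?_⟩
  · intro n
    show 0 < b (q n).1 (q (n + 1)).1
    rw [hq_succ n]
    exact (hg (q n)).1
  · intro n
    show (∏ k ∈ Finset.range (n + 1), (1 - lam / deg b m (q k).1)) * v x₀ ≤ v (q (n + 1)).1
    induction n with
    | zero =>
      simpa only [zero_add, Finset.prod_range_one, hq_succ 0, hq0] using (hg (q 0)).2
    | succ n ih =>
      have hstep : (1 - lam / deg b m (q (n + 1)).1) * v (q (n + 1)).1 ≤ v (q (n + 2)).1 := by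
        rw [hq_succ (n + 1)]
        exact (hg (q (n + 1))).2
      have hcpos : 0 < 1 - lam / deg b m (q (n + 1)).1 := (key (q (n + 1)).1 (q (n + 1)).2).1
      calc (∏ k ∈ Finset.range (n + 2), (1 - lam / deg b m (q k).1)) * v x₀
          = (1 - lam / deg b m (q (n + 1)).1) *
            ((∏ k ∈ Finset.range (n + 1), (1 - lam / deg b m (q k).1)) * v x₀) := by
            rw [Finset.prod_range_succ]; ring
        _ ≤ (1 - lam / deg b m (q (n + 1)).1) * v (q (n + 1)).1 :=
            mul_le_mul_of_nonneg_left ih (le_of_lt hcpos)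
        _ ≤ v (q (n + 2)).1 := hstep
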